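/- C is hyperconnexive: for all formulas A and B, the converse of Boethius' thesis is a theorem of C, i.e., the sequent ⇒ ∼(A → ∼B) → (A → B) is derivable in G3C. -/
import Mathlib


/-- Formulas of the connexive logic C: propositional variables, strong
negation `∼`, conjunction, disjunction and implication. -/
inductive Formula : Type
  | var : Nat → Formula
  | snot : Formula → Formula
  | and : Formula → Formula → Formula
  | or : Formula → Formula → Formula
  | imp : Formula → Formula → Formula
deriving DecidableEq
/-- Derivability of sequents `Γ ⇒ A` (with `Γ` a finite multiset of formulas)
in the sequent calculus `G3C` for the connexive logic `C`. -/
inductive Gder : Multiset Formula → Formula → Prop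
  | ax {Γ n} : Gder (.var n ::ₘ Γ) (.var n)
  | axSnot {Γ n} : Gder (.snot (.var n) ::ₘ Γ) (.snot (.var n))
  | andR {Γ A B} : Gder Γ A → Gder Γ B → Gder Γ (.and A B)
  | andL {Γ A B C} : Gder (A ::ₘ B ::ₘ Γ) C → Gder (.and A B ::ₘ Γ) C
  | orR₁ {Γ A B} : Gder Γ A → Gder Γ (.or A B)
  | orR₂ {Γ A B} : Gder Γ B → Gder Γ (.or A B)
  | orL {Γ A B C} : Gder (A ::ₘ Γ) C → Gder (B ::ₘ Γ) C → Gder (.or A B ::ₘ Γ) C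
  | impR {Γ A B} : Gder (A ::ₘ Γ) B → Gder Γ (.imp A B)
  | impL {Γ A B C} : Gder (.imp A B ::ₘ Γ) A → Gder (B ::ₘ Γ) C → Gder (.imp A B ::ₘ Γ) C
  | snotSnotR {Γ A} : Gder Γ A → Gder Γ (.snot (.snot A))
  | snotSnotL {Γ A C} : Gder (A ::ₘ Γ) C → Gder (.snot (.snot A) ::ₘ Γ) C
  | snotAndR₁ {Γ A B} : Gder Γ (.snot A) → Gder Γ (.snot (.and A B))
  | snotAndR₂ {Γ A B} : Gder Γ (.snot B) → Gder Γ (.snot (.and A B))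
  | snotAndL {Γ A B C} : Gder (.snot A ::ₘ Γ) C → Gder (.snot B ::ₘ Γ) C →
      Gder (.snot (.and A B) ::ₘ Γ) C
  | snotOrR {Γ A B} : Gder Γ (.snot A) → Gder Γ (.snot B) → Gder Γ (.snot (.or A B))
  | snotOrL {Γ A B C} : Gder (.snot A ::ₘ .snot B ::ₘ Γ) C → Gder (.snot (.or A B) ::ₘ Γ) C
  | snotImpR {Γ A B} : Gder (A ::ₘ Γ) (.snot B) → Gder Γ (.snot (.imp A B))
  | snotImpL {Γ A B C} : Gder (.snot (.imp A B) ::ₘ Γ) A → Gder (.snot B ::ₘ Γ) C →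
      Gder (.snot (.imp A B) ::ₘ Γ) C
lemma Gder.id (A : Formula) :
    (∀ Γ, Gder (A ::ₘ Γ) A) ∧ (∀ Γ, Gder (.snot A ::ₘ Γ) (.snot A)) := by
  induction A with
  | var n => exact ⟨fun Γ => .ax, fun Γ => .axSnot⟩
  | snot A ih =>
    refine ⟨ih.2, fun Γ => ?_⟩
    exact .snotSnotR (.snotSnotL (ih.1 Γ))
  | and A B ihA ihB =>
    constructor
    · intro Γ
      apply Gder.andL
      apply Gder.andR (ihA.1 _)
      rw [Multiset.cons_swap]
      exact ihB.1 _
    · intro Γ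
      exact .snotAndL (.snotAndR₁ (ihA.2 _)) (.snotAndR₂ (ihB.2 _))
  | or A B ihA ihB =>
    constructor
    · intro Γ
      exact .orL (.orR₁ (ihA.1 _)) (.orR₂ (ihB.1 _))
    · intro Γ
      apply Gder.snotOrL
      apply Gder.snotOrR (ihA.2 _)
      rw [Multiset.cons_swap]
      exact ihB.2 _
  | imp A B ihA ihB =>
    constructor
    · intro Γ
      apply Gder.impR
      rw [Multiset.cons_swap]
      apply Gder.impL _ (ihB.1 _)
      rw [Multiset.cons_swap]
      exact ihA.1 _
    · intro Γ
      apply Gder.snotImpR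
      rw [Multiset.cons_swap]
      apply Gder.snotImpL _ (ihB.2 _)
      rw [Multiset.cons_swap]
      exact ihA.1 _

/-- `C` is hyperconnexive: the converse of Boethius' thesis
`∼(A → ∼B) → (A → B)` is a theorem of `C`. -/
theorem C_hyperconnexive (A B : Formula) :
    Gder 0 (.imp (.snot (.imp A (.snot B))) (.imp A B)) := by
  apply Gder.impR
  apply Gder.impR
  rw [Multiset.cons_swap]
  apply Gder.snotImpL
  · rw [Multiset.cons_swap]
    exact (Gder.id A).1 _
  · exact .snotSnotL ((Gder.id B).1 _)
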